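/- Let N ≥ 1 and let y₁, …, y_N ∈ [0, 2π). Then the series ∑_{m=1}^∞ (1/m²)·|∑_{j=1}^N e^{i m y_j}|² converges and equals π² ∑_{j,j'=1}^N B₂(frac((y_j − y_{j'})/(2π))), where B₂(x) = x² − x + 1/6 is the second Bernoulli polynomial and frac denotes the fractional part (with frac(0) = 0). -/

import Mathlib

open Real Finset

lemma bern2_eval (x : ℝ) :
    (Polynomial.map (algebraMap ℚ ℝ) (Polynomial.bernoulli 2)).eval x = x ^ 2 - x + 1 / 6 := by
  simp [Polynomial.bernoulli, Finset.sum_range_succ, bernoulli_one]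
  norm_num [bernoulli]
  ring

lemma pair_hasSum (θ : ℝ) :
    HasSum (fun m : ℕ => (1 / ((m : ℝ) + 1) ^ 2) * Real.cos (((m : ℝ) + 1) * θ))
      (π ^ 2 * (Int.fract (θ / (2 * π)) ^ 2 - Int.fract (θ / (2 * π)) + 1 / 6)) := by
  set x := Int.fract (θ / (2 * π)) with hxdef
  have hx : x ∈ Set.Icc (0 : ℝ) 1 := ⟨Int.fract_nonneg _, (Int.fract_lt_one _).le⟩
  have h := hasSum_one_div_nat_pow_mul_cos (k := 1) one_ne_zero hx
  have h0 : (fun n : ℕ => 1 / (n : ℝ) ^ (2 * 1) * Real.cos (2 * π * n * x)) 0 = 0 := by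
    norm_num
  have h1 := (hasSum_nat_add_iff' 1).mpr h
  simp only [Finset.sum_range_one, h0, sub_zero] at h1
  have hcos : ∀ n : ℕ, Real.cos (2 * π * ((n : ℝ) + 1) * x) = Real.cos (((n : ℝ) + 1) * θ) := by
    intro n
    have hπ : (2 * π) ≠ 0 := by positivity
    have key : 2 * π * ((n : ℝ) + 1) * x = ((n : ℝ) + 1) * θ +
        ((-((n : ℤ) + 1) * ⌊θ / (2 * π)⌋ : ℤ) : ℝ) * (2 * π) := by
      rw [hxdef, Int.fract]
      push_cast
      field_simp
      ring
    rw [key, Real.cos_add_int_mul_two_pi]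
  have hval : (-1 : ℝ) ^ (1 + 1) * (2 * π) ^ (2 * 1) / 2 / (Nat.factorial (2 * 1) : ℝ) *
      (Polynomial.map (algebraMap ℚ ℝ) (Polynomial.bernoulli (2 * 1))).eval x
      = π ^ 2 * (x ^ 2 - x + 1 / 6) := by
    have h2 : (Nat.factorial (2 * 1) : ℝ) = 2 := by norm_num [Nat.factorial]
    rw [show (2 * 1) = 2 from rfl, bern2_eval, h2]
    ring
  rw [hval] at h1
  convert h1 using 2 with n
  · rfl
  push_cast
  rw [hcos]

lemma abs_sq_eq (N : ℕ) (y : Fin N → ℝ) (c : ℝ) :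
    ‖∑ j, Complex.exp (Complex.I * (c : ℂ) * (y j : ℂ))‖ ^ 2
      = ∑ j, ∑ j', Real.cos (c * (y j - y j')) := by
  set S := ∑ j, Complex.exp (Complex.I * (c : ℂ) * (y j : ℂ)) with hS
  have h1 : (‖S‖ : ℝ) ^ 2 = (S * (starRingEnd ℂ) S).re := by
    rw [Complex.mul_conj]
    simp [Complex.sq_norm]
  rw [h1, hS, map_sum, Finset.sum_mul_sum]
  rw [Complex.re_sum]
  refine Finset.sum_congr rfl fun j _ => ?_
  rw [Complex.re_sum]
  refine Finset.sum_congr rfl fun j' _ => ?_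
  rw [← Complex.exp_conj, ← Complex.exp_add]
  have : Complex.I * (c : ℂ) * (y j : ℂ) + (starRingEnd ℂ) (Complex.I * (c : ℂ) * (y j' : ℂ))
      = ((c * (y j - y j') : ℝ) : ℂ) * Complex.I := by
    simp [Complex.conj_I, Complex.conj_ofReal]
    push_cast
    ring
  rw [this, Complex.exp_ofReal_mul_I_re]

theorem second_order_coefficient_series (N : ℕ) (hN : 1 ≤ N) (y : Fin N → ℝ)
    (hmem : ∀ j, y j ∈ Set.Ico 0 (2 * Real.pi)) :
    HasSum
      (fun m : ℕ =>
        (1 / ((m : ℝ) + 1) ^ 2) *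
          ‖∑ j, Complex.exp (Complex.I * ((m + 1 : ℕ) : ℂ) * (y j : ℂ))‖ ^ 2)
      (Real.pi ^ 2 * ∑ j, ∑ j',
        (Int.fract ((y j - y j') / (2 * Real.pi)) ^ 2 -
          Int.fract ((y j - y j') / (2 * Real.pi)) + 1 / 6)) := by
  have key : HasSum
      (fun m : ℕ => ∑ j, ∑ j',
        (1 / ((m : ℝ) + 1) ^ 2) * Real.cos (((m : ℝ) + 1) * (y j - y j')))
      (∑ j, ∑ j', π ^ 2 * (Int.fract ((y j - y j') / (2 * π)) ^ 2 -
          Int.fract ((y j - y j') / (2 * π)) + 1 / 6)) := by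
    refine hasSum_sum fun j _ => hasSum_sum fun j' _ => pair_hasSum _
  have heq : ∀ m : ℕ,
      (1 / ((m : ℝ) + 1) ^ 2) *
          ‖∑ j, Complex.exp (Complex.I * ((m + 1 : ℕ) : ℂ) * (y j : ℂ))‖ ^ 2
        = ∑ j, ∑ j', (1 / ((m : ℝ) + 1) ^ 2) * Real.cos (((m : ℝ) + 1) * (y j - y j')) := by
    intro m
    rw [show ((m + 1 : ℕ) : ℂ) = ((((m : ℝ) + 1) : ℝ) : ℂ) by push_cast; ring,
      abs_sq_eq N y ((m : ℝ) + 1), Finset.mul_sum]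
    exact Finset.sum_congr rfl fun j _ => by rw [Finset.mul_sum]
  simp_rw [heq, Finset.mul_sum]
  exact key
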